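/- Let α generate a real quadratic field K with discriminant D and suppose H(α) ≤ 0.48·√D. Then one of the four elements α, α', −α, −α' is reduced, where α' is the Galois conjugate of α. Moreover the quadratic polynomial ax² + bx + c of such an α satisfies b² − 4ac = D (i.e. the conductor m with b² − 4ac = m²D equals 1). -/

import Mathlib

open NumberField IntermediateField

/-- `IsReduced01 x y` says that a real quadratic number with real embedding values
`x` (the number itself) and `y` (its Galois conjugate) is reduced: `x > 1` and
`−1 < y < 0`. -/
def IsReducedPair (x y : ℝ) : Prop := 1 < x ∧ -1 < y ∧ y < 0

lemma reduced_cases (x y A C S : ℝ) (hAS : |A| ≤ 0.48*S)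
    (hCS : |C| ≤ 0.48*S) (hS : 0 < S)
    (hprod : A*(x*y) = C) (hdisc : A^2*(x-y)^2 = S^2) (hAC : A*C < 0) :
    IsReducedPair x y ∨ IsReducedPair y x ∨
    IsReducedPair (-x) (-y) ∨ IsReducedPair (-y) (-x) := by
  have hA0 : A ≠ 0 := by rintro rfl; simp at hAC
  have hApos : 0 < |A| := abs_pos.2 hA0
  have hxy0 : x * y < 0 := by
    rcases lt_trichotomy (x*y) 0 with h | h | h
    · exact h
    · rw [h, mul_zero] at hprod; rw [← hprod] at hAC; simp at hAC
    · exfalso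
      have h2 : A^2*(x*y) < 0 := by
        have : A * C = A^2*(x*y) := by rw [← hprod]; ring
        linarith [this ▸ hAC]
      nlinarith [sq_nonneg A]
  have hd : |A| * |x - y| = S := by
    have h1 : |A * (x-y)| = S := by
      have h2 : (A*(x-y))^2 = S^2 := by nlinarith [hdisc]
      have h3 := abs_nonneg (A*(x-y))
      nlinarith [sq_abs (A*(x-y))]
    rw [← abs_mul]; exact h1
  have hprodabs : |A| * (-(x*y)) = |C| := by
    rw [← abs_of_neg hxy0, ← abs_mul, hprod]
  have hdne : |A| ≠ 0 := ne_of_gt hApos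
  rcases mul_neg_iff.1 hxy0 with ⟨hx, hy⟩ | ⟨hx, hy⟩
  · -- x > 0, y < 0
    have habs : |x - y| = x - y := abs_of_pos (by linarith)
    rw [habs] at hd
    have h25 : 25/12 ≤ x - y := by
      nlinarith [mul_le_mul_of_nonneg_right hAS (by linarith : (0:ℝ) ≤ x - y)]
    have hpq : x * (-y) ≤ 0.48 * (x - y) := by
      have h1 : |A| * (x * (-y)) = |C| := by rw [← hprodabs]; ring
      nlinarith
    rcases le_or_gt (-y) 0.96 with hq | hq
    · left; exact ⟨by linarith, by linarith, hy⟩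
    · have hx96 : x ≤ 0.96 := by nlinarith
      right; right; right; exact ⟨by nlinarith, by linarith, by linarith⟩
  · -- x < 0, y > 0
    have habs : |x - y| = y - x := by rw [abs_sub_comm]; exact abs_of_pos (by linarith)
    rw [habs] at hd
    have h25 : 25/12 ≤ y - x := by
      nlinarith [mul_le_mul_of_nonneg_right hAS (by linarith : (0:ℝ) ≤ y - x)]
    have hpq : y * (-x) ≤ 0.48 * (y - x) := by
      have h1 : |A| * (y * (-x)) = |C| := by rw [← hprodabs]; ring
      nlinarith
    rcases le_or_gt (-x) 0.96 with hq | hq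
    · right; left; exact ⟨by linarith, by linarith, hx⟩
    · have hy96 : y ≤ 0.96 := by nlinarith
      right; right; left; exact ⟨by nlinarith, by linarith, by linarith⟩

lemma discr_rel (K : Type*) [Field K] [NumberField K]
    (hdeg : Module.finrank ℚ K = 2)
    (σ τ : K →+* ℝ)
    (α : K) (a b c : ℤ)
    (hroot : (a : K) * α ^ 2 + (b : K) * α + (c : K) = 0)
    (hΔR : ((b:ℝ)^2 - 4*a*c) = (a:ℝ)^2*(σ α - τ α)^2)
    (hxyne : σ α ≠ τ α) :
    ∃ d : ℤ, b^2 - 4*a*c = d^2 * NumberField.discr K := by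
  classical
  -- integrality of a•α
  have hint : IsIntegral ℤ ((a:K) * α) := by
    refine ⟨Polynomial.X^2 + (Polynomial.C b * Polynomial.X + Polynomial.C (a*c)), ?_, ?_⟩
    · exact Polynomial.monic_X_pow_add
        (lt_of_le_of_lt Polynomial.degree_linear_le (by norm_num))
    · have h2 : ((a:K)*α)^2 + (b:K)*((a:K)*α) + ((a*c : ℤ):K) =
          (a:K) * ((a : K) * α ^ 2 + (b : K) * α + (c : K)) := by push_cast; ring
      have h3 : Polynomial.eval₂ (algebraMap ℤ K) ((a:K)*α)
          (Polynomial.X^2 + (Polynomial.C b * Polynomial.X + Polynomial.C (a*c)))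
          = ((a:K)*α)^2 + (b:K)*((a:K)*α) + ((a*c : ℤ):K) := by
        simp only [Polynomial.eval₂_add, Polynomial.eval₂_mul, Polynomial.eval₂_X,
          Polynomial.eval₂_X_pow, Polynomial.eval₂_C]
        rw [eq_intCast, eq_intCast]; ring
      rw [h3, h2, hroot, mul_zero]
  let θO : 𝓞 K := ⟨(a:K) * α, hint⟩
  let ι := Module.Free.ChooseBasisIndex ℤ (𝓞 K)
  have hcard : Fintype.card ι = 2 := by
    rw [← Module.finrank_eq_card_chooseBasisIndex, RingOfIntegers.rank, hdeg]
  let e0 : ι ≃ Fin 2 := Fintype.equivFinOfCardEq hcard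
  let bB : Module.Basis (Fin 2) ℚ K := (integralBasis K).reindex e0
  let v : Fin 2 → K := ![1, (a:K)*α]
  let P : Matrix (Fin 2) (Fin 2) ℚ := bB.toMatrix v
  let Q : Matrix (Fin 2) (Fin 2) ℤ :=
    Matrix.of fun i j => (RingOfIntegers.basis K).repr (![1, θO] j) (e0.symm i)
  have hPQ : P = Q.map (algebraMap ℤ ℚ) := by
    ext i j
    have hvj : v j = algebraMap (𝓞 K) K (![1, θO] j) := by
      fin_cases j
      · simp [v]
      · rfl
    show bB.repr (v j) i = _
    rw [hvj, Module.Basis.repr_reindex_apply, integralBasis_repr_apply]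
    rfl
  have hdetPQ : P.det = algebraMap ℤ ℚ Q.det := by
    rw [hPQ, ← RingHom.mapMatrix_apply, ← RingHom.map_det]
  -- discr of v in terms of discr K
  have hv : v = Matrix.vecMul (⇑bB) (P.map (algebraMap ℚ K)) := (bB.toMatrix_map_vecMul v).symm
  have hbB : Algebra.discr ℚ (bB : Fin 2 → K) = ((discr K : ℤ) : ℚ) := by
    rw [show (bB : Fin 2 → K) = (integralBasis K : ι → K) ∘ e0.symm from Module.Basis.coe_reindex _ _,
      Algebra.discr_reindex]
    exact (coe_discr K).symm
  have hdiscr1 : Algebra.discr ℚ v = P.det^2 * ((discr K : ℤ) : ℚ) := by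
    rw [hv, Algebra.discr_of_matrix_vecMul, hbB]
  -- compute discr of v via embeddings in ℂ
  let φ : K →ₐ[ℚ] ℂ := (Complex.ofRealHom.comp σ).toRatAlgHom
  let ψ : K →ₐ[ℚ] ℂ := (Complex.ofRealHom.comp τ).toRatAlgHom
  have hφψ : φ ≠ ψ := by
    intro h
    apply hxyne
    have h2 : φ α = ψ α := congrArg (fun f => f α) h
    exact Complex.ofReal_injective h2
  let f : Fin 2 → (K →ₐ[ℚ] ℂ) := ![φ, ψ]
  have hinj : Function.Injective f := by
    intro i j hij
    fin_cases i <;> fin_cases j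
    · rfl
    · exact absurd hij hφψ
    · exact absurd hij.symm hφψ
    · rfl
  have hcard2 : Fintype.card (K →ₐ[ℚ] ℂ) = 2 := by
    rw [AlgHom.card, hdeg]
  let eqv : Fin 2 ≃ (K →ₐ[ℚ] ℂ) :=
    Equiv.ofBijective f ((Fintype.bijective_iff_injective_and_card f).2 ⟨hinj, by simp [hcard2]⟩)
  have hMdet : (Algebra.embeddingsMatrixReindex ℚ ℂ v eqv).det
      = (a:ℂ) * (τ α - σ α) := by
    rw [Matrix.det_fin_two]
    have e00 : Algebra.embeddingsMatrixReindex ℚ ℂ v eqv 0 0 = φ (v 0) := rfl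
    have e01 : Algebra.embeddingsMatrixReindex ℚ ℂ v eqv 0 1 = ψ (v 0) := rfl
    have e10 : Algebra.embeddingsMatrixReindex ℚ ℂ v eqv 1 0 = φ (v 1) := rfl
    have e11 : Algebra.embeddingsMatrixReindex ℚ ℂ v eqv 1 1 = ψ (v 1) := rfl
    rw [e00, e01, e10, e11]
    have hv0 : v 0 = 1 := rfl
    have hv1 : v 1 = (a:K)*α := rfl
    rw [hv0, hv1]
    have hφa : φ ((a:K)*α) = (a:ℂ) * ((σ α : ℝ) : ℂ) := by
      rw [map_mul, map_intCast]; rfl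
    have hψa : ψ ((a:K)*α) = (a:ℂ) * ((τ α : ℝ) : ℂ) := by
      rw [map_mul, map_intCast]; rfl
    rw [map_one, map_one, hφa, hψa]
    ring
  have hdiscr2 : algebraMap ℚ ℂ (Algebra.discr ℚ v) = ((b^2 - 4*a*c : ℤ) : ℂ) := by
    rw [Algebra.discr_eq_det_embeddingsMatrixReindex_pow_two ℚ ℂ v eqv, hMdet]
    have : ((b^2 - 4*a*c : ℤ) : ℂ) = (((b:ℝ)^2 - 4*a*c : ℝ) : ℂ) := by push_cast; ring
    rw [this, hΔR]
    push_cast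
    ring
  have hdiscrv : Algebra.discr ℚ v = ((b^2 - 4*a*c : ℤ) : ℚ) := by
    have h := hdiscr2
    rw [eq_ratCast (algebraMap ℚ ℂ)] at h
    exact_mod_cast h
  refine ⟨Q.det, ?_⟩
  have : ((b^2 - 4*a*c : ℤ) : ℚ) = ((Q.det^2 * discr K : ℤ) : ℚ) := by
    rw [← hdiscrv, hdiscr1, hdetPQ, eq_intCast]
    push_cast
    ring
  exact_mod_cast this

/-- Let `α` generate a real quadratic field `K` with discriminant `D`
(with the two real embeddings `σ, τ` of `K`), let `a·x² + b·x + c` be the primitive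
minimal polynomial of `α`, and suppose `H(α) ≤ 0.48·√D`. Then `b² − 4ac = D` (the
conductor `m` with `b² − 4ac = m²·D` equals 1), and one of `α, α', −α, −α'` is reduced,
where `α'` denotes the Galois conjugate of `α` (i.e. the pair of embedding values is
swapped). -/
theorem small_generator_real_quadratic_is_reduced
    (K : Type*) [Field K] [NumberField K]
    (hdeg : Module.finrank ℚ K = 2)
    (hD : 0 < NumberField.discr K)
    (σ τ : K →+* ℝ) (hστ : σ ≠ τ)
    (α : K) (hgen : ℚ⟮α⟯ = ⊤)
    (a b c : ℤ)
    (hroot : (a : K) * α ^ 2 + (b : K) * α + (c : K) = 0)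
    (hgcd : Int.gcd (Int.gcd a b) c = 1)
    (hsmall : ((max |a| (max |b| |c|) : ℤ) : ℝ) ≤
      0.48 * Real.sqrt (NumberField.discr K : ℝ)) :
    b ^ 2 - 4 * a * c = NumberField.discr K ∧
    (IsReducedPair (σ α) (τ α) ∨ IsReducedPair (τ α) (σ α) ∨
     IsReducedPair (-σ α) (-τ α) ∨ IsReducedPair (-τ α) (-σ α)) := by
  set x := σ α with hxdef
  set y := τ α with hydef
  set S := Real.sqrt (NumberField.discr K : ℝ) with hSdef
  -- embedding values satisfy the quadratic
  have hx : (a:ℝ) * x^2 + (b:ℝ) * x + (c:ℝ) = 0 := by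
    have h := congrArg σ hroot
    simpa only [map_add, map_mul, map_pow, map_intCast, map_zero] using h
  have hy : (a:ℝ) * y^2 + (b:ℝ) * y + (c:ℝ) = 0 := by
    have h := congrArg τ hroot
    simpa only [map_add, map_mul, map_pow, map_intCast, map_zero] using h
  -- the two embeddings differ at α
  have hxyne : x ≠ y := by
    intro h
    apply hστ
    let T : IntermediateField ℚ K :=
      { σ.eqLocusField τ with
        algebraMap_mem' := fun q => by
          show σ (algebraMap ℚ K q) = τ (algebraMap ℚ K q)
          rw [eq_ratCast (algebraMap ℚ K) q, map_ratCast, map_ratCast] }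
    have hT : ⊤ ≤ T := by
      rw [← hgen]
      exact adjoin_le_iff.2 (by rw [Set.singleton_subset_iff]; exact h)
    exact RingHom.ext fun z => hT (mem_top (x := z))
  -- a ≠ 0
  have haR : (a:ℝ) ≠ 0 := by
    intro ha0
    have hb0 : (b:ℝ) = 0 := by
      have h1 : (b:ℝ) * (x - y) = 0 := by
        rw [ha0] at hx hy; linarith
      rcases mul_eq_zero.1 h1 with h | h
      · exact h
      · exact absurd (sub_eq_zero.1 h) hxyne
    have hc0 : (c:ℝ) = 0 := by rw [ha0, hb0] at hx; linarith
    have ha' : a = 0 := by exact_mod_cast ha0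
    have hb' : b = 0 := by exact_mod_cast hb0
    have hc' : c = 0 := by exact_mod_cast hc0
    rw [ha', hb', hc'] at hgcd
    simp at hgcd
  -- root relations
  have hsubR : (a:ℝ) * (x + y) = -(b:ℝ) := by
    have h1 : (x - y) * ((a:ℝ)*(x+y) + b) = 0 := by linear_combination hx - hy
    rcases mul_eq_zero.1 h1 with h | h
    · exact absurd (sub_eq_zero.1 h) hxyne
    · linarith
  have hprodR : (a:ℝ) * (x * y) = (c:ℝ) := by linear_combination x * hsubR - hx
  have hΔR : ((b:ℝ)^2 - 4*a*c) = (a:ℝ)^2*(x - y)^2 := by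
    have hb' : (b:ℝ) = -((a:ℝ)*(x+y)) := by linarith
    rw [hb', ← hprodR]; ring
  -- bounds
  have hDR : (0:ℝ) < (NumberField.discr K : ℝ) := by exact_mod_cast hD
  have hS : 0 < S := Real.sqrt_pos.2 hDR
  have hS2 : S^2 = (NumberField.discr K : ℝ) := Real.sq_sqrt hDR.le
  have habs_a : |(a:ℝ)| ≤ 0.48 * S := by
    calc |(a:ℝ)| = ((|a| : ℤ) : ℝ) := by push_cast; rfl
    _ ≤ ((max |a| (max |b| |c|) : ℤ) : ℝ) := by
        exact_mod_cast le_max_left _ _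
    _ ≤ 0.48 * S := hsmall
  have habs_b : |(b:ℝ)| ≤ 0.48 * S := by
    calc |(b:ℝ)| = ((|b| : ℤ) : ℝ) := by push_cast; rfl
    _ ≤ ((max |a| (max |b| |c|) : ℤ) : ℝ) := by
        exact_mod_cast le_trans (le_max_left _ _) (le_max_right _ _)
    _ ≤ 0.48 * S := hsmall
  have habs_c : |(c:ℝ)| ≤ 0.48 * S := by
    calc |(c:ℝ)| = ((|c| : ℤ) : ℝ) := by push_cast; rfl
    _ ≤ ((max |a| (max |b| |c|) : ℤ) : ℝ) := by
        exact_mod_cast le_trans (le_max_right _ _) (le_max_right _ _)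
    _ ≤ 0.48 * S := hsmall
  have hb2 : (b:ℝ)^2 ≤ 0.2304 * S^2 := by
    nlinarith [sq_abs (b:ℝ), abs_nonneg (b:ℝ)]
  have hac2 : |(a:ℝ)*(c:ℝ)| ≤ 0.2304 * S^2 := by
    rw [abs_mul]
    nlinarith [abs_nonneg (a:ℝ), abs_nonneg (c:ℝ)]
  -- discriminant relation
  obtain ⟨d, hrel⟩ := discr_rel K hdeg σ τ α a b c hroot hΔR hxyne
  have hΔpos : (0:ℝ) < (b:ℝ)^2 - 4*a*c := by
    rw [hΔR]
    have h1 : (0:ℝ) < (a:ℝ)^2 := by positivity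
    have h2 : (0:ℝ) < (x - y)^2 := by
      have := sub_ne_zero.2 hxyne
      positivity
    exact mul_pos h1 h2
  have hd0 : d ≠ 0 := by
    rintro rfl
    rw [show ((0:ℤ)^2 = 0) from rfl, zero_mul] at hrel
    have : ((b:ℝ)^2 - 4*a*c) = 0 := by exact_mod_cast congrArg ((Int.cast : ℤ → ℝ)) hrel
    linarith
  have hd1 : 1 ≤ d^2 := by
    have h1 : 0 < d^2 := lt_of_le_of_ne (sq_nonneg d) (Ne.symm (pow_ne_zero 2 hd0))
    linarith
  have hrelR : ((d:ℝ)^2) * S^2 = (b:ℝ)^2 - 4*a*c := by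
    rw [hS2]
    exact_mod_cast (congrArg ((Int.cast : ℤ → ℝ)) hrel).symm
  have hd2 : d^2 = 1 := by
    by_contra hne
    have h2le : 2 ≤ d^2 := by
      have h := lt_of_le_of_ne hd1 (Ne.symm hne)
      linarith [Int.lt_iff_add_one_le.mp h]
    have h2leR : (2:ℝ) ≤ (d:ℝ)^2 := by exact_mod_cast h2le
    have hub : (b:ℝ)^2 - 4*a*c ≤ 1.152 * S^2 := by
      have h1 : -((a:ℝ)*(c:ℝ)) ≤ |(a:ℝ)*(c:ℝ)| := neg_le_abs _
      linarith [h1, hb2, hac2]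
    linarith [mul_le_mul_of_nonneg_right h2leR (sq_nonneg S), pow_pos hS 2, hrelR, hub]
  have hmain : b^2 - 4*a*c = NumberField.discr K := by
    rw [hrel, hd2, one_mul]
  refine ⟨hmain, ?_⟩
  have hdisc : (a:ℝ)^2*(x - y)^2 = S^2 := by
    rw [← hΔR, hS2, ← hmain]
    push_cast
    ring
  have hAC : (a:ℝ) * (c:ℝ) < 0 := by
    have h4 : 4*((a:ℝ)*(c:ℝ)) = (b:ℝ)^2 - ((b:ℝ)^2 - 4*a*c) := by ring
    have h5 : (b:ℝ)^2 - 4*a*c = S^2 := by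
      rw [← hrelR]
      have hd2R : ((d:ℝ))^2 = 1 := by exact_mod_cast congrArg (Int.cast : ℤ → ℝ) hd2
      rw [hd2R, one_mul]
    linarith [pow_pos hS 2, hb2, h4, h5]
  exact reduced_cases x y (a:ℝ) (c:ℝ) S habs_a habs_c hS hprodR hdisc hAC
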